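/- With the extremal setup below, assume further that the vertices v₁, v₂, v_n are pairwise adjacent and induce an unbalanced triangle in Γ′. Then, for all sufficiently large n, every negative edge of Γ′ joins two of the vertices v₁, v₂, v_n. -/

import Mathlib

open Matrix

/-- A signed graph of order `n`: a real symmetric `n × n` matrix with zero diagonal
whose off-diagonal entries lie in `{-1, 0, 1}`. -/
def IsSignedGraph {n : ℕ} (A : Matrix (Fin n) (Fin n) ℝ) : Prop :=
  A.IsSymm ∧ (∀ i, A i i = 0) ∧ ∀ i j, A i j = -1 ∨ A i j = 0 ∨ A i j = 1

/-- The index (largest eigenvalue) of a signed graph. -/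
noncomputable def lambdaMax {n : ℕ} (A : Matrix (Fin n) (Fin n) ℝ) : ℝ :=
  sSup (spectrum ℝ A)

/-- The smallest eigenvalue of a signed graph. -/
noncomputable def lambdaMin {n : ℕ} (A : Matrix (Fin n) (Fin n) ℝ) : ℝ :=
  sInf (spectrum ℝ A)

/-- The spectral radius of a signed graph. -/
noncomputable def rho {n : ℕ} (A : Matrix (Fin n) (Fin n) ℝ) : ℝ :=
  max (lambdaMax A) (-(lambdaMin A))

/-- There is a cycle, all of whose vertices lie in `s`, along whose edges
the product of the entries of `A` is negative. -/
def HasNegCycleOn {n : ℕ} (A : Matrix (Fin n) (Fin n) ℝ) (s : Set (Fin n)) : Prop :=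
  ∃ m : ℕ, 3 ≤ m ∧ ∃ c : ℕ → Fin n,
    (∀ i < m, ∀ j < m, c i = c j → i = j) ∧ (∀ i < m, c i ∈ s) ∧
    (∀ i < m, A (c i) (c ((i + 1) % m)) ≠ 0) ∧
    (∏ i ∈ Finset.range m, A (c i) (c ((i + 1) % m))) < 0

/-- A signed graph is unbalanced if it has a negative cycle. -/
def IsUnbalanced {n : ℕ} (A : Matrix (Fin n) (Fin n) ℝ) : Prop :=
  HasNegCycleOn A Set.univ

/-- An `m`-element set of pairwise adjacent vertices whose induced signed complete
subgraph is unbalanced. -/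
def IsKmMinus {n : ℕ} (A : Matrix (Fin n) (Fin n) ℝ) (m : ℕ) (s : Finset (Fin n)) : Prop :=
  s.card = m ∧ (∀ i ∈ s, ∀ j ∈ s, i ≠ j → A i j ≠ 0) ∧ HasNegCycleOn A ↑s

/-- A `K₄⁻` of a signed graph. -/
def IsK4Minus {n : ℕ} (A : Matrix (Fin n) (Fin n) ℝ) (s : Finset (Fin n)) : Prop :=
  IsKmMinus A 4 s

/-- A signed graph is `t𝒦₄⁻`-free if it contains fewer than `t` distinct `K₄⁻`'s. -/
def TK4Free {n : ℕ} (t : ℕ) (A : Matrix (Fin n) (Fin n) ℝ) : Prop :=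
  {s : Finset (Fin n) | IsK4Minus A s}.ncard < t

/-- Switching isomorphism of signed graphs: `B = (PD) A (PD)ᵀ` for a permutation
matrix `P` and a `±1` diagonal matrix `D`. -/
def SwitchIso {n : ℕ} (A B : Matrix (Fin n) (Fin n) ℝ) : Prop :=
  ∃ (σ : Equiv.Perm (Fin n)) (d : Fin n → ℝ), (∀ i, d i = 1 ∨ d i = -1) ∧
    B = (σ.permMatrix ℝ * Matrix.diagonal d) * A * (σ.permMatrix ℝ * Matrix.diagonal d)ᵀ

/-- The signed graph `Γ_{s,n}`: the vertices `0, …, n-2` are pairwise adjacent,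
the last vertex `n-1` is adjacent exactly to `0, …, s`, and every edge is positive
except the single negative edge joining `n-1` and `0`. -/
noncomputable def GammaSN (s n : ℕ) : Matrix (Fin n) (Fin n) ℝ :=
  fun i j =>
    if i = j then 0
    else if i.val ≠ n - 1 ∧ j.val ≠ n - 1 then 1
    else if min i.val j.val = 0 then -1
    else if min i.val j.val ≤ s then 1
    else 0

/-- The signed graph `Σ_{k,n}` with parameter `r`: vertex `0` is `u₁`, vertex `1` is `u₂`,
vertices `2, …, r+1` are `w₁, …, w_r`, vertices `r+2, …, r+k+1` are `q₁, …, q_k`, and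
vertices `r+k+2, …, n-1` are `v₁, …, v_{n-2-r-k}`.  The only negative edge is `u₁u₂`. -/
noncomputable def SigmaKN (r k n : ℕ) : Matrix (Fin n) (Fin n) ℝ :=
  fun i j =>
    if i = j then 0
    else if min i.val j.val = 0 then (if max i.val j.val = 1 then -1 else 1)
    else if min i.val j.val = 1 then (if max i.val j.val ≤ r + k + 1 then 1 else 0)
    else if max i.val j.val ≤ r + 1 then 1
    else if max i.val j.val ≤ r + k + 1 then 0
    else 1

/-! ### Auxiliary lemmas -/

/-- Rayleigh quotient bound: for a real symmetric matrix, the quadratic form is bounded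
by the largest element of the spectrum times the squared norm. -/
lemma rayleigh_le {n : ℕ} {A : Matrix (Fin n) (Fin n) ℝ} (hA : A.IsSymm)
    (y : Fin n → ℝ) : y ⬝ᵥ A *ᵥ y ≤ lambdaMax A * (y ⬝ᵥ y) := by
  have hH : A.IsHermitian := by
    rw [Matrix.IsHermitian, Matrix.conjTranspose_eq_transpose_of_trivial]; exact hA
  set U : Matrix (Fin n) (Fin n) ℝ := (hH.eigenvectorUnitary : Matrix (Fin n) (Fin n) ℝ) with hUdef
  set z : Fin n → ℝ := star U *ᵥ y with hz
  have hU : U * star U = 1 := Matrix.mem_unitaryGroup_iff.mp hH.eigenvectorUnitary.2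
  have hsU : star U = Uᵀ := by
    rw [Matrix.star_eq_conjTranspose, Matrix.conjTranspose_eq_transpose_of_trivial]
  have h1 : y ⬝ᵥ A *ᵥ y = ∑ i, hH.eigenvalues i * (z i)^2 := by
    conv_lhs => rw [hH.spectral_theorem, Unitary.conjStarAlgAut_apply]
    rw [← Matrix.mulVec_mulVec, ← Matrix.mulVec_mulVec, Matrix.dotProduct_mulVec,
      ← Matrix.mulVec_transpose, ← hsU, ← hz]
    simp only [dotProduct, Matrix.mulVec_diagonal, Function.comp_apply,
      RCLike.ofReal_real_eq_id, id_eq]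
    exact Finset.sum_congr rfl fun i _ => by ring
  have h2 : y ⬝ᵥ y = ∑ i, (z i)^2 := by
    have h : ∑ i, (z i)^2 = z ⬝ᵥ z := by simp [dotProduct, sq]
    rw [h, hz, Matrix.dotProduct_mulVec, ← Matrix.mulVec_transpose, hsU,
      Matrix.transpose_transpose, Matrix.mulVec_mulVec, ← hsU, hU, Matrix.one_mulVec]
  have h3 : ∀ i, hH.eigenvalues i ≤ lambdaMax A := fun i =>
    le_csSup (A.finite_spectrum).bddAbove (hH.eigenvalues_mem_spectrum_real i)
  rw [h1, h2, Finset.mul_sum]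
  exact Finset.sum_le_sum fun i _ => mul_le_mul_of_nonneg_right (h3 i) (sq_nonneg _)

/-- entries of our explicit comparison graph -/
noncomputable def gcf (n : ℕ) (k : Fin n) : ℝ :=
  if k.val = 1 then -1 else if k.val ≤ 3 then 1 else 0

/-- Our explicit unbalanced `2𝒦₄⁻`-free comparison graph: complete graph on the vertices
`1, …, n-1` (all edges positive), and vertex `0` joined negatively to `1` and positively
to `2` and `3`. -/
noncomputable def MyGamma (n : ℕ) : Matrix (Fin n) (Fin n) ℝ :=
  fun i j => if i = j then 0 else if i.val = 0 then gcf n j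
    else if j.val = 0 then gcf n i else 1

lemma myGamma_signed (n : ℕ) : IsSignedGraph (MyGamma n) := by
  refine ⟨?_, ?_, ?_⟩
  · ext i j
    simp only [Matrix.transpose_apply, MyGamma]
    by_cases hij : i = j
    · simp [hij]
    · have hij' : j ≠ i := fun h => hij h.symm
      by_cases hi : i.val = 0
      · have hj : ¬ j.val = 0 := fun h => hij (Fin.ext (by omega))
        simp [hij, hij', hi, hj]
      · by_cases hj : j.val = 0
        · simp [hij, hij', hi, hj]
        · simp [hij, hij', hi, hj]
  · intro i; simp [MyGamma]
  · intro i j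
    unfold MyGamma gcf
    split_ifs <;> norm_num

lemma myGamma_unbalanced (n : ℕ) (hn : 5 ≤ n) : IsUnbalanced (MyGamma n) := by
  have h0 : (0:ℕ) < n := by omega
  have h1 : (1:ℕ) < n := by omega
  have h2 : (2:ℕ) < n := by omega
  refine ⟨3, le_refl 3,
    fun k => if k % 3 = 0 then ⟨0, h0⟩ else if k % 3 = 1 then ⟨1, h1⟩ else ⟨2, h2⟩,
    ?_, ?_, ?_, ?_⟩
  · intro i hi j hj hc
    interval_cases i <;> interval_cases j <;> simp_all
  · intro i _; trivial
  · intro i hi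
    have e1 : MyGamma n ⟨0,h0⟩ ⟨1,h1⟩ = -1 := by simp [MyGamma, gcf, Fin.ext_iff]
    have e2 : MyGamma n ⟨1,h1⟩ ⟨2,h2⟩ = 1 := by simp [MyGamma, gcf, Fin.ext_iff]
    have e3 : MyGamma n ⟨2,h2⟩ ⟨0,h0⟩ = 1 := by simp [MyGamma, gcf, Fin.ext_iff]
    interval_cases i <;> simp_all
  · have e1 : MyGamma n ⟨0,h0⟩ ⟨1,h1⟩ = -1 := by simp [MyGamma, gcf, Fin.ext_iff]
    have e2 : MyGamma n ⟨1,h1⟩ ⟨2,h2⟩ = 1 := by simp [MyGamma, gcf, Fin.ext_iff]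
    have e3 : MyGamma n ⟨2,h2⟩ ⟨0,h0⟩ = 1 := by simp [MyGamma, gcf, Fin.ext_iff]
    rw [Finset.prod_range_succ, Finset.prod_range_succ, Finset.prod_range_succ,
      Finset.prod_range_zero]
    norm_num [e1, e2, e3]

lemma succ_mod_ne {m i : ℕ} (hm : 3 ≤ m) (hi : i < m) : (i + 1) % m ≠ i ∧ (i + 1) % m < m := by
  constructor
  · rcases Nat.lt_or_ge (i + 1) m with h | h
    · rw [Nat.mod_eq_of_lt h]; omega
    · have : i + 1 = m := by omega
      rw [this, Nat.mod_self]; omega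
  · exact Nat.mod_lt _ (by omega)

lemma myGamma_tk4free (n t : ℕ) (hn : 5 ≤ n) (ht : 2 ≤ t) : TK4Free t (MyGamma n) := by
  have h0 : (0:ℕ) < n := by omega
  set z0 : Fin n := ⟨0, h0⟩ with hz0
  set s₀ : Finset (Fin n) := {⟨0, by omega⟩, ⟨1, by omega⟩, ⟨2, by omega⟩, ⟨3, by omega⟩} with hs₀
  have hsub : {s : Finset (Fin n) | IsK4Minus (MyGamma n) s} ⊆ {s₀} := by
    intro s hs
    obtain ⟨hcard, hadj, m, hm, c, hinj, hmem, hne, hprod⟩ := hs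
    have hz0s : z0 ∈ s := by
      by_contra h0s
      have hone : ∀ i ∈ Finset.range m, MyGamma n (c i) (c ((i + 1) % m)) = 1 := by
        intro i hi
        rw [Finset.mem_range] at hi
        obtain ⟨hne', hlt⟩ := succ_mod_ne hm hi
        have ha : c i ∈ s := hmem i hi
        have hb : c ((i + 1) % m) ∈ s := hmem _ hlt
        have hab : c i ≠ c ((i + 1) % m) := by
          intro h; exact hne' (hinj _ hlt _ hi h.symm)
        have hav : (c i).val ≠ 0 := by
          intro h; exact h0s (by rwa [show c i = z0 from Fin.ext h] at ha)
        have hbv : (c ((i + 1) % m)).val ≠ 0 := by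
          intro h; exact h0s (by rwa [show c ((i + 1) % m) = z0 from Fin.ext h] at hb)
        simp [MyGamma, hab, hav, hbv]
      rw [Finset.prod_congr rfl hone, Finset.prod_const_one] at hprod
      norm_num at hprod
    have hval : ∀ a ∈ s, a.val ≤ 3 := by
      intro a ha
      by_cases haz : a = z0
      · simp [haz, hz0]
      · have := hadj z0 hz0s a ha (fun h => haz h.symm)
        have hav : a.val ≠ 0 := fun h => haz (Fin.ext h)
        simp only [MyGamma, hz0] at this
        have : gcf n a ≠ 0 := by
          simpa [show z0 ≠ a from fun h => haz h.symm, hz0, show ¬ (⟨0, h0⟩ : Fin n) = a from fun h => haz (by rw [← h, hz0])] using this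
        unfold gcf at this
        split_ifs at this with h1 h2
        · omega
        · exact h2
        · exact absurd rfl this
    have hsubs : s ⊆ s₀ := by
      intro a ha
      have := hval a ha
      simp only [hs₀, Finset.mem_insert, Finset.mem_singleton, Fin.ext_iff]
      omega
    have hcard₀ : s₀.card = 4 := by
      rw [hs₀]
      rw [Finset.card_insert_of_notMem (by simp [Fin.ext_iff]),
        Finset.card_insert_of_notMem (by simp [Fin.ext_iff]),
        Finset.card_insert_of_notMem (by simp [Fin.ext_iff]), Finset.card_singleton]
    have : s = s₀ := Finset.eq_of_subset_of_card_le hsubs (by omega)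
    simp [this]
  calc {s : Finset (Fin n) | IsK4Minus (MyGamma n) s}.ncard
      ≤ ({s₀} : Set (Finset (Fin n))).ncard := Set.ncard_le_ncard hsub (Set.finite_singleton _)
    _ = 1 := Set.ncard_singleton _
    _ < t := by omega

lemma myGamma_lambda (n : ℕ) (hn : 5 ≤ n) : ((n:ℝ) - 2) < lambdaMax (MyGamma n) := by
  have h0 : (0:ℕ) < n := by omega
  have hnR : (5:ℝ) ≤ (n:ℝ) := by exact_mod_cast hn
  set ε : ℝ := 1 / ((n:ℝ) - 2) with hε
  have h2pos : (0:ℝ) < (n:ℝ) - 2 := by nlinarith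
  have hεpos : 0 < ε := hε ▸ div_pos one_pos h2pos
  set z0 : Fin n := ⟨0, h0⟩ with hz0
  set i1 : Fin n := ⟨1, by omega⟩ with hi1
  set i2 : Fin n := ⟨2, by omega⟩ with hi2
  set i3 : Fin n := ⟨3, by omega⟩ with hi3
  set y : Fin n → ℝ := fun a => if a.val = 0 then ε else 1 with hy
  have hrow0 : ∑ b, MyGamma n z0 b * y b = 1 := by
    have hpt : ∀ b : Fin n, MyGamma n z0 b * y b =
        (if b = i1 then (-1:ℝ) else 0) + ((if b = i2 then (1:ℝ) else 0)
          + (if b = i3 then (1:ℝ) else 0)) := by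
      intro b
      by_cases hb0 : b.val = 0
      · have : b = z0 := Fin.ext hb0
        simp [this, MyGamma, hz0, hi1, hi2, hi3, Fin.ext_iff]
      · have hbz : z0 ≠ b := fun h => hb0 (by simp [← h, hz0])
        simp only [MyGamma, hz0, hbz, if_neg hbz]
        simp only [hy, hb0, if_false, mul_one, if_neg hb0]
        unfold gcf
        by_cases hb1 : b.val = 1
        · simp [show b = i1 from Fin.ext hb1, hi1, hi2, hi3, hb1, Fin.ext_iff]
        · by_cases hb2 : b.val = 2
          · simp [show b = i2 from Fin.ext hb2, hi1, hi2, hi3, Fin.ext_iff, hb1, hb2]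
          · by_cases hb3 : b.val = 3
            · simp [show b = i3 from Fin.ext hb3, hi1, hi2, hi3, Fin.ext_iff, hb1, hb2, hb3]
            · have : ¬ b.val ≤ 3 := by omega
              simp [hi1, hi2, hi3, Fin.ext_iff, hb1, hb2, hb3, this]
    rw [Finset.sum_congr rfl (fun b _ => hpt b)]
    rw [Finset.sum_add_distrib, Finset.sum_add_distrib, Finset.sum_ite_eq' Finset.univ,
      Finset.sum_ite_eq' Finset.univ, Finset.sum_ite_eq' Finset.univ]
    simp
  have hrowa : ∀ a : Fin n, a.val ≠ 0 →
      ∑ b, MyGamma n a b * y b = (n:ℝ) - 2 + gcf n a * ε := by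
    intro a hav
    have hpt : ∀ b : Fin n, MyGamma n a b * y b =
        (1 - (if b = a then (1:ℝ) else 0)) + (if b = z0 then gcf n a * ε - 1 else 0) := by
      intro b
      by_cases hba : b = a
      · have haz : ¬ a = z0 := fun h => hav (by rw [h])
        simp [hba, MyGamma, haz]
      · have hab : a ≠ b := fun h => hba h.symm
        by_cases hbz : b = z0
        · have hbv : b.val = 0 := by rw [hbz]
          simp only [MyGamma, if_neg hab, if_neg hav, if_pos hbv, hy, hbv, if_true,
            if_pos hbz, if_neg hba]
          ring
        · have hbv : b.val ≠ 0 := fun h => hbz (Fin.ext h)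
          simp [MyGamma, hab, hav, hbv, hy, hba, hbz]
    rw [Finset.sum_congr rfl (fun b _ => hpt b)]
    rw [Finset.sum_add_distrib, Finset.sum_sub_distrib, Finset.sum_const,
      Finset.sum_ite_eq' Finset.univ, Finset.sum_ite_eq' Finset.univ]
    simp only [Finset.mem_univ, if_true, Finset.card_univ, Fintype.card_fin, nsmul_eq_mul,
      mul_one]
    ring
  have hgcf : ∑ b, gcf n b = 2 := by
    have hpt : ∀ b : Fin n, gcf n b =
        (if b = z0 then (1:ℝ) else 0) + ((if b = i1 then (-1:ℝ) else 0)
          + ((if b = i2 then (1:ℝ) else 0) + (if b = i3 then (1:ℝ) else 0))) := by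
      intro b
      unfold gcf
      by_cases hb0 : b.val = 0
      · simp [show b = z0 from Fin.ext hb0, hz0, hi1, hi2, hi3, Fin.ext_iff]
      · by_cases hb1 : b.val = 1
        · simp [show b = i1 from Fin.ext hb1, hz0, hi1, hi2, hi3, Fin.ext_iff, hb1]
        · by_cases hb2 : b.val = 2
          · simp [show b = i2 from Fin.ext hb2, hz0, hi1, hi2, hi3, Fin.ext_iff, hb1, hb2]
          · by_cases hb3 : b.val = 3
            · simp [show b = i3 from Fin.ext hb3, hz0, hi1, hi2, hi3, Fin.ext_iff, hb1, hb2, hb3]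
            · have h4 : ¬ b.val ≤ 3 := by omega
              simp [hz0, hi1, hi2, hi3, Fin.ext_iff, hb0, hb1, hb2, hb3, h4]
    rw [Finset.sum_congr rfl (fun b _ => hpt b)]
    rw [Finset.sum_add_distrib, Finset.sum_add_distrib, Finset.sum_add_distrib,
      Finset.sum_ite_eq' Finset.univ, Finset.sum_ite_eq' Finset.univ,
      Finset.sum_ite_eq' Finset.univ, Finset.sum_ite_eq' Finset.univ]
    simp
    norm_num
  have hS : y ⬝ᵥ (MyGamma n) *ᵥ y = ((n:ℝ) - 1) * ((n:ℝ) - 2) + 2 * ε := by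
    have hexp : y ⬝ᵥ (MyGamma n) *ᵥ y = ∑ a, y a * ∑ b, MyGamma n a b * y b := by
      simp [dotProduct, Matrix.mulVec]
    rw [hexp, ← Finset.add_sum_erase Finset.univ _ (Finset.mem_univ z0)]
    have hyz0 : y z0 = ε := by simp [hy, hz0]
    rw [hyz0, hrow0, mul_one]
    have herase : ∀ a ∈ Finset.univ.erase z0, y a * ∑ b, MyGamma n a b * y b
        = ((n:ℝ) - 2) + gcf n a * ε := by
      intro a ha
      have hav : a.val ≠ 0 := by
        intro h
        exact (Finset.mem_erase.mp ha).1 (Fin.ext h)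
      have hya : y a = 1 := by simp [hy, hav]
      rw [hya, one_mul, hrowa a hav]
    have hgcferase : ∑ a ∈ Finset.univ.erase z0, gcf n a = 1 := by
      have hsplit := Finset.add_sum_erase Finset.univ (gcf n) (Finset.mem_univ z0)
      rw [hgcf] at hsplit
      have hgz0 : gcf n z0 = 1 := by simp [gcf, hz0]
      linarith [hsplit, hgz0]
    have hcast : ((n - 1 : ℕ) : ℝ) = (n:ℝ) - 1 := by
      have h1n : (1:ℕ) ≤ n := by omega
      push_cast [Nat.cast_sub h1n]
      ring
    rw [Finset.sum_congr rfl herase, Finset.sum_add_distrib, ← Finset.sum_mul,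
      Finset.sum_const, Finset.card_erase_of_mem (Finset.mem_univ z0),
      Finset.card_univ, Fintype.card_fin, nsmul_eq_mul, hcast, hgcferase]
    ring
  have hQ : y ⬝ᵥ y = (n:ℝ) - 1 + ε^2 := by
    have hpt : ∀ a : Fin n, y a * y a = 1 + (if a = z0 then ε^2 - 1 else 0) := by
      intro a
      by_cases ha : a = z0
      · simp [ha, hy, hz0, sq]
      · have : a.val ≠ 0 := fun h => ha (Fin.ext h)
        simp [hy, this, ha]
    simp only [dotProduct]
    rw [Finset.sum_congr rfl (fun a _ => hpt a), Finset.sum_add_distrib,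
      Finset.sum_ite_eq' Finset.univ, Finset.sum_const, Finset.card_univ, Fintype.card_fin]
    simp
    ring
  have hkey := rayleigh_le (myGamma_signed n).1 y
  rw [hS, hQ] at hkey
  by_contra hcon
  push_neg at hcon
  have hQpos : (0:ℝ) < (n:ℝ) - 1 + ε^2 := by nlinarith
  have h2 : lambdaMax (MyGamma n) * ((n:ℝ) - 1 + ε^2) ≤ ((n:ℝ)-2) * ((n:ℝ) - 1 + ε^2) :=
    mul_le_mul_of_nonneg_right hcon (le_of_lt hQpos)
  have hεval : ((n:ℝ) - 2) * ε = 1 := by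
    rw [hε]; field_simp
  nlinarith [hεpos]

theorem extremal_negative_edges_in_triangle (t r : ℕ) (ht : 2 ≤ t)
    (hr : (r : ℝ) = (1 + Real.sqrt (8 * (t : ℝ) - 7)) / 2) :
    ∃ N : ℕ, ∀ n : ℕ, ∀ _hn : N + 4 ≤ n, t ≤ (n - 2).choose 2 →
      ∀ (A : Matrix (Fin n) (Fin n) ℝ) (x : Fin n → ℝ),
        IsSignedGraph A → IsUnbalanced A → TK4Free t A →
        (∀ B : Matrix (Fin n) (Fin n) ℝ,
          IsSignedGraph B → IsUnbalanced B → TK4Free t B → lambdaMax B ≤ lambdaMax A) →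
        (∀ i, 0 ≤ x i) → (∑ i, x i ^ 2) = 1 → A.mulVec x = lambdaMax A • x →
        let v1 : Fin n := ⟨0, by omega⟩
        let v2 : Fin n := ⟨1, by omega⟩
        let vn : Fin n := ⟨n - 1, by omega⟩
        A v1 v2 ≠ 0 → A v2 vn ≠ 0 → A vn v1 ≠ 0 →
        A v1 v2 * A v2 vn * A vn v1 < 0 →
        ∀ i j : Fin n, A i j < 0 →
          i ∈ ({v1, v2, vn} : Set (Fin n)) ∧ j ∈ ({v1, v2, vn} : Set (Fin n)) := by
  refine ⟨1, ?_⟩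
  intro n hn _hch A x hsig hunb hfree hmax hxnn hxunit hxeig v1 v2 vn h12 h2n hn1 htri i j hij
  have hn5 : 5 ≤ n := by omega
  by_contra hcon
  -- basic facts about the bad edge
  have hsymAP : ∀ a b : Fin n, A b a = A a b := fun a b => by
    have := congrFun (congrFun hsig.1 a) b
    simpa [Matrix.transpose_apply] using this
  have hijneg : A i j = -1 := by
    rcases hsig.2.2 i j with h | h | h
    · exact h
    · exfalso; rw [h] at hij; exact lt_irrefl 0 hij
    · exfalso; rw [h] at hij; linarith
  have hjineg : A j i = -1 := by rw [hsymAP i j]; exact hijneg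
  have hijne : i ≠ j := by
    intro h
    rw [h, hsig.2.1 j] at hijneg
    norm_num at hijneg
  -- the triangle vertices
  have hv1 : v1 = ⟨0, by omega⟩ := rfl
  have hv2 : v2 = ⟨1, by omega⟩ := rfl
  have hvn : vn = ⟨n - 1, by omega⟩ := rfl
  have d12 : v1 ≠ v2 := by rw [hv1, hv2]; simp [Fin.ext_iff]
  have d1n : v1 ≠ vn := by rw [hv1, hvn]; simp [Fin.ext_iff]; omega
  have d2n : v2 ≠ vn := by rw [hv2, hvn]; simp [Fin.ext_iff]; omega
  have m1 : v1 ∈ ({v1, v2, vn} : Set (Fin n)) := by simp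
  have m2 : v2 ∈ ({v1, v2, vn} : Set (Fin n)) := by simp
  have mn : vn ∈ ({v1, v2, vn} : Set (Fin n)) := by simp
  -- the modified graph B : delete the bad edge
  set B : Matrix (Fin n) (Fin n) ℝ :=
    fun a b => if (a = i ∧ b = j) ∨ (a = j ∧ b = i) then 0 else A a b with hB
  have hAeq : ∀ a b, ¬((a = i ∧ b = j) ∨ (a = j ∧ b = i)) → B a b = A a b := by
    intro a b h
    simp only [hB]
    exact if_neg h
  have hBsym : B.IsSymm := by
    ext a b
    rw [Matrix.transpose_apply]; simp only [hB]
    by_cases h : (b = i ∧ a = j) ∨ (b = j ∧ a = i)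
    · rw [if_pos h, if_pos (by tauto)]
    · rw [if_neg h, if_neg (by tauto), hsymAP]
  have hBsigned : IsSignedGraph B := by
    refine ⟨hBsym, fun a => ?_, fun a b => ?_⟩
    · simp only [hB]
      split_ifs
      · rfl
      · exact hsig.2.1 a
    · simp only [hB]
      split_ifs
      · exact Or.inr (Or.inl rfl)
      · exact hsig.2.2 a b
  have hpT : ∀ a b : Fin n, a ∈ ({v1, v2, vn} : Set (Fin n)) →
      b ∈ ({v1, v2, vn} : Set (Fin n)) → B a b = A a b := by
    intro a b ha hb
    apply hAeq
    rintro (⟨rfl, rfl⟩ | ⟨rfl, rfl⟩)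
    · exact hcon ⟨ha, hb⟩
    · exact hcon ⟨hb, ha⟩
  -- B is unbalanced via the triangle
  have hBunb : IsUnbalanced B := by
    have e1 : B v1 v2 = A v1 v2 := hpT _ _ m1 m2
    have e2 : B v2 vn = A v2 vn := hpT _ _ m2 mn
    have e3 : B vn v1 = A vn v1 := hpT _ _ mn m1
    set c : ℕ → Fin n := fun k => if k = 0 then v1 else if k = 1 then v2 else vn with hc
    have hc0 : c 0 = v1 := rfl
    have hc1 : c 1 = v2 := rfl
    have hc2 : c 2 = vn := rfl
    refine ⟨3, le_refl 3, c, ?_, fun k _ => trivial, ?_, ?_⟩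
    · intro a ha b hb hcc
      interval_cases a <;> interval_cases b <;> rw [hc] at hcc <;> norm_num at hcc ⊢ <;>
        first
          | exact absurd hcc d12
          | exact absurd hcc d1n
          | exact absurd hcc d2n
          | exact absurd hcc.symm d12
          | exact absurd hcc.symm d1n
          | exact absurd hcc.symm d2n
    · intro k hk
      interval_cases k
      · rw [show (0+1) % 3 = 1 from rfl, hc0, hc1, e1]; exact h12
      · rw [show (1+1) % 3 = 2 from rfl, hc1, hc2, e2]; exact h2n
      · rw [show (2+1) % 3 = 0 from rfl, hc2, hc0, e3]; exact hn1
    · rw [Finset.prod_range_succ, Finset.prod_range_succ, Finset.prod_range_succ,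
        Finset.prod_range_zero, one_mul, show (0+1) % 3 = 1 from rfl,
        show (1+1) % 3 = 2 from rfl, show (2+1) % 3 = 0 from rfl, hc0, hc1, hc2, e1, e2, e3]
      exact htri
  -- B is t𝒦₄⁻-free
  have hBfree : TK4Free t B := by
    have hsub : {s : Finset (Fin n) | IsK4Minus B s} ⊆ {s : Finset (Fin n) | IsK4Minus A s} := by
      intro s hs
      obtain ⟨hcard, hadj, m, hm, c, hinj, hmem, hne, hprod⟩ := hs
      have hnotij : ¬(i ∈ s ∧ j ∈ s) := by
        rintro ⟨his, hjs⟩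
        apply hadj i his j hjs hijne
        simp [hB]
      have heq : ∀ a ∈ s, ∀ b ∈ s, B a b = A a b := by
        intro a ha b hb
        apply hAeq
        rintro (⟨rfl, rfl⟩ | ⟨rfl, rfl⟩)
        · exact hnotij ⟨ha, hb⟩
        · exact hnotij ⟨hb, ha⟩
      refine ⟨hcard, fun a ha b hb hab => ?_, m, hm, c, hinj, hmem, fun k hk => ?_, ?_⟩
      · rw [← heq a ha b hb]
        exact hadj a ha b hb hab
      · rw [← heq _ (hmem k hk) _ (hmem _ (succ_mod_ne hm hk).2)]
        exact hne k hk
      · have hpc : ∀ k ∈ Finset.range m, A (c k) (c ((k + 1) % m)) = B (c k) (c ((k + 1) % m)) := by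
          intro k hk
          rw [Finset.mem_range] at hk
          exact (heq _ (hmem k hk) _ (hmem _ (succ_mod_ne hm hk).2)).symm
        rw [Finset.prod_congr rfl hpc]
        exact hprod
    exact lt_of_le_of_lt (Set.ncard_le_ncard hsub (Set.toFinite _)) hfree
  have hmaxB := hmax B hBsigned hBunb hBfree
  -- Rayleigh computations
  have hxx : x ⬝ᵥ x = 1 := by
    rw [← hxunit]
    exact Finset.sum_congr rfl fun k _ => (pow_two (x k)).symm
  have hlam : x ⬝ᵥ A *ᵥ x = lambdaMax A := by
    rw [hxeig, dotProduct_smul, smul_eq_mul, hxx, mul_one]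
  have expand : ∀ (M : Matrix (Fin n) (Fin n) ℝ),
      x ⬝ᵥ M *ᵥ x = ∑ a, ∑ b, x a * (M a b * x b) := by
    intro M
    simp [dotProduct, Matrix.mulVec, Finset.mul_sum]
  have hBA : ∀ a b, B a b = A a b + (if (a = i ∧ b = j) ∨ (a = j ∧ b = i) then 1 else 0) := by
    intro a b
    simp only [hB]
    split_ifs with h
    · rcases h with ⟨rfl, rfl⟩ | ⟨rfl, rfl⟩
      · rw [hijneg]; ring
      · rw [hjineg]; ring
    · ring
  have key : ∀ a b : Fin n, x a * (B a b * x b) - x a * (A a b * x b) =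
      (if b = j then (if a = i then x i * x j else 0) else 0)
        + (if b = i then (if a = j then x j * x i else 0) else 0) := by
    intro a b
    rw [hBA a b]
    by_cases hcond : (a = i ∧ b = j) ∨ (a = j ∧ b = i)
    · rw [if_pos hcond]
      rcases hcond with ⟨rfl, rfl⟩ | ⟨rfl, rfl⟩
      · rw [if_pos rfl, if_pos rfl, if_neg (fun h => hijne h.symm)]
        ring
      · rw [if_pos rfl, if_pos rfl, if_neg hijne]
        ring
    · rw [if_neg hcond]
      have e0 : (if b = j then (if a = i then x i * x j else 0) else 0) = 0 := by
        split_ifs with hb ha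
        · exact absurd (Or.inl ⟨ha, hb⟩) hcond
        · rfl
        · rfl
      have e0' : (if b = i then (if a = j then x j * x i else 0) else 0) = 0 := by
        split_ifs with hb ha
        · exact absurd (Or.inr ⟨ha, hb⟩) hcond
        · rfl
        · rfl
      rw [e0, e0']
      ring
  have hdiff : x ⬝ᵥ B *ᵥ x - x ⬝ᵥ A *ᵥ x = x i * x j + x j * x i := by
    rw [expand A, expand B, ← Finset.sum_sub_distrib]
    have h1 : ∀ a : Fin n, (∑ b, x a * (B a b * x b)) - (∑ b, x a * (A a b * x b))
        = (if a = i then x i * x j else 0) + (if a = j then x j * x i else 0) := by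
      intro a
      rw [← Finset.sum_sub_distrib, Finset.sum_congr rfl fun b _ => key a b,
        Finset.sum_add_distrib, Finset.sum_ite_eq' Finset.univ, Finset.sum_ite_eq' Finset.univ]
      simp
    rw [Finset.sum_congr rfl fun a _ => h1 a, Finset.sum_add_distrib,
      Finset.sum_ite_eq' Finset.univ, Finset.sum_ite_eq' Finset.univ]
    simp
  have hray := rayleigh_le hBsym x
  rw [hxx, mul_one] at hray
  have hij0 : x i * x j = 0 := by
    have hchain : lambdaMax A + (x i * x j + x j * x i) ≤ lambdaMax A := by
      calc lambdaMax A + (x i * x j + x j * x i) = x ⬝ᵥ B *ᵥ x := by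
            rw [← hlam]; linarith [hdiff]
        _ ≤ lambdaMax B := hray
        _ ≤ lambdaMax A := hmaxB
    have hnn : 0 ≤ x i * x j := mul_nonneg (hxnn i) (hxnn j)
    have hcomm : x j * x i = x i * x j := mul_comm _ _
    linarith
  obtain ⟨k, hk⟩ : ∃ k : Fin n, x k = 0 := by
    rcases mul_eq_zero.mp hij0 with h | h
    exacts [⟨i, h⟩, ⟨j, h⟩]
  -- upper bound on lambdaMax A using the zero coordinate
  have hub : lambdaMax A ≤ (n:ℝ) - 2 := by
    rw [← hlam, expand A]
    have step1 : ∑ a, ∑ b, x a * (A a b * x b)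
        ≤ ∑ a : Fin n, ∑ b : Fin n, (if a = b then (0:ℝ) else x a * x b) := by
      apply Finset.sum_le_sum
      intro a _
      apply Finset.sum_le_sum
      intro b _
      by_cases hab : a = b
      · rw [if_pos hab, hab, hsig.2.1 b]
        simp
      · rw [if_neg hab]
        have hA1 : A a b ≤ 1 := by
          rcases hsig.2.2 a b with h | h | h <;> rw [h] <;> norm_num
        calc x a * (A a b * x b) = A a b * (x a * x b) := by ring
          _ ≤ 1 * (x a * x b) :=
              mul_le_mul_of_nonneg_right hA1 (mul_nonneg (hxnn a) (hxnn b))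
          _ = x a * x b := one_mul _
    have step2 : ∑ a : Fin n, ∑ b : Fin n, (if a = b then (0:ℝ) else x a * x b)
        = (∑ a, x a)^2 - 1 := by
      have hpt : ∀ a b : Fin n, (if a = b then (0:ℝ) else x a * x b)
          = x a * x b - (if b = a then x a * x b else 0) := by
        intro a b
        by_cases h : a = b
        · rw [h]; simp
        · rw [if_neg h, if_neg (fun hh => h hh.symm)]; ring
      rw [Finset.sum_congr rfl fun a _ => Finset.sum_congr rfl fun b _ => hpt a b]
      rw [Finset.sum_congr rfl fun a _ => Finset.sum_sub_distrib _ _, Finset.sum_sub_distrib]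
      have e1 : ∑ a : Fin n, ∑ b : Fin n, x a * x b = (∑ a, x a)^2 := by
        rw [pow_two, Finset.sum_mul_sum]
      have e2 : ∑ a : Fin n, ∑ b : Fin n, (if b = a then x a * x b else 0) = 1 := by
        have hinner : ∀ a : Fin n, ∑ b : Fin n, (if b = a then x a * x b else 0) = x a ^ 2 := by
          intro a
          rw [Finset.sum_ite_eq' Finset.univ]
          simp [pow_two]
        rw [Finset.sum_congr rfl fun a _ => hinner a, hxunit]
      rw [e1, e2]
    have step3 : (∑ a, x a)^2 ≤ (n:ℝ) - 1 := by
      have hze : ∑ a, x a = ∑ a ∈ Finset.univ.erase k, x a := (Finset.sum_erase _ hk).symm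
      have hcs := sq_sum_le_card_mul_sum_sq (s := Finset.univ.erase k) (f := x)
      have hcard : (Finset.univ.erase k).card = n - 1 := by
        rw [Finset.card_erase_of_mem (Finset.mem_univ k), Finset.card_univ, Fintype.card_fin]
      have hsq : ∑ a ∈ Finset.univ.erase k, x a ^ 2 ≤ 1 := by
        rw [← hxunit]
        exact Finset.sum_le_sum_of_subset_of_nonneg (Finset.subset_univ _)
          (fun b _ _ => sq_nonneg _)
      have hcast : ((n - 1 : ℕ) : ℝ) = (n:ℝ) - 1 := by
        have h1n : (1:ℕ) ≤ n := by omega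
        push_cast [Nat.cast_sub h1n]
        ring
      have hnR : (5:ℝ) ≤ (n:ℝ) := by exact_mod_cast hn5
      rw [hcard, hcast] at hcs
      have hmul : ((n:ℝ) - 1) * (∑ a ∈ Finset.univ.erase k, x a ^ 2) ≤ ((n:ℝ) - 1) * 1 :=
        mul_le_mul_of_nonneg_left hsq (by linarith)
      rw [hze]
      linarith
    linarith [step1, step2, step3]
  -- lower bound from the comparison graph
  have hlow := hmax (MyGamma n) (myGamma_signed n) (myGamma_unbalanced n hn5)
    (myGamma_tk4free n t hn5 ht)
  have hgt := myGamma_lambda n hn5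
  linarith
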